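/- arXiv:1810.02471 — 3 statements merged into one kernel-verified Lean document; each statement's English description precedes it below -/
import Mathlib

section
/- Every trace has a unique Foata normal form: for every t ∈ M(Σ, D) there is exactly one word A₁⋯A_p ∈ Foata with Π(A₁⋯A_p) = t, where Π is the canonical morphism sending a set {a₁,…,a_n} of pairwise independent letters to the trace [a₁⋯a_n]. -/
variable {α : Type*}

/-- One commutation step: swap two adjacent independent letters
(letters `a`, `b` with `(a,b) ∉ D`, i.e. `(a,b) ∈ I`). -/
inductive TraceStep (D : α → α → Prop) : List α → List α → Prop
  | swap (x y : List α) (a b : α) (h : ¬ D a b) :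
      TraceStep D (x ++ a :: b :: y) (x ++ b :: a :: y)

/-- Trace equivalence `≡_D`: the least equivalence relation containing all
swaps of adjacent independent letters in arbitrary contexts (equivalently,
the least congruence on `Σ*` with `ab ≡ ba` for `(a,b) ∈ I`). -/
abbrev TraceEquiv (D : α → α → Prop) : List α → List α → Prop :=
  Relation.EqvGen (TraceStep D)

/-- `I_D⁻`: nonempty sets of pairwise independent letters (independence cliques). -/
def Clique (D : α → α → Prop) : Type _ :=
  {A : Finset α // A.Nonempty ∧ ∀ a ∈ A, ∀ b ∈ A, a ≠ b → ¬ D a b}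

/-- `A ▷ B` : every letter of `B` depends on some letter of `A`. -/
def Rhd (D : α → α → Prop) (A B : Clique D) : Prop :=
  ∀ b ∈ B.1, ∃ a ∈ A.1, D a b

/-- The set of Foata normal forms: words `A₁ ⋯ A_p` over `I_D⁻` with
`A_i ▷ A_{i+1}` for all `i`. -/
def Foata (D : α → α → Prop) : Language (Clique D) :=
  {w | w.Chain' (Rhd D)}

/-- The canonical morphism `Π : (I_D⁻)* → Σ*` (composed with `[·]` it gives
the canonical morphism to `M(Σ,D)`): each clique is mapped to the product of
its elements (in some order; the trace is independent of the order). -/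
noncomputable def cliqueFlat {D : α → α → Prop} (w : List (Clique D)) : List α :=
  (w.map fun A => A.1.toList).flatten

set_option linter.unusedSectionVars false

section Helpers

variable {D : α → α → Prop}

/-- basic congruence: trace equivalence in a two-sided context -/
theorem te_context (x y : List α) {l l' : List α} (h : TraceEquiv D l l') :
    TraceEquiv D (x ++ l ++ y) (x ++ l' ++ y) := by
  induction h with
  | rel a b hab =>
    apply Relation.EqvGen.rel
    rcases hab with ⟨x', y', a', b', h'⟩
    have := TraceStep.swap (D := D) (x ++ x') (y' ++ y) a' b' h'
    simpa using this
  | refl a => exact Relation.EqvGen.refl _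
  | symm a b _ ih => exact Relation.EqvGen.symm _ _ ih
  | trans a b c _ _ ih1 ih2 => exact Relation.EqvGen.trans _ _ _ ih1 ih2

theorem te_left (x : List α) {l l' : List α} (h : TraceEquiv D l l') :
    TraceEquiv D (x ++ l) (x ++ l') := by simpa using te_context x [] h

theorem te_right (y : List α) {l l' : List α} (h : TraceEquiv D l l') :
    TraceEquiv D (l ++ y) (l' ++ y) := by simpa using te_context [] y h

theorem te_cons (b : α) {l l' : List α} (h : TraceEquiv D l l') :
    TraceEquiv D (b :: l) (b :: l') := by simpa using te_left [b] h

/-- bubble a letter rightwards through independent letters -/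
theorem te_bubble {a : α} {l : List α} (r : List α) (h : ∀ b ∈ l, ¬ D a b) :
    TraceEquiv D (a :: (l ++ r)) (l ++ a :: r) := by
  induction l with
  | nil => exact Relation.EqvGen.refl _
  | cons b l ih =>
    refine Relation.EqvGen.trans _ (b :: a :: (l ++ r)) _ ?_ ?_
    · apply Relation.EqvGen.rel
      have := TraceStep.swap (D := D) [] (l ++ r) a b (h b (by simp))
      simpa using this
    · exact te_cons b (ih fun c hc => h c (by simp [hc]))

theorem te_of_perm {l l' : List α} (h : l.Perm l')
    (hind : ∀ x ∈ l, ∀ y ∈ l, x ≠ y → ¬ D x y) : TraceEquiv D l l' := by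
  induction h with
  | nil => exact Relation.EqvGen.refl _
  | cons x h ih =>
    exact te_cons x (ih fun a ha b hb => hind a (by simp [ha]) b (by simp [hb]))
  | swap x y l =>
    by_cases hxy : x = y
    · subst hxy; exact Relation.EqvGen.refl _
    · apply Relation.EqvGen.rel
      have := TraceStep.swap (D := D) [] l y x
        (hind y (by simp) x (by simp) (Ne.symm hxy))
      simpa using this
  | trans h1 h2 ih1 ih2 =>
    refine Relation.EqvGen.trans _ _ _ (ih1 hind) (ih2 ?_)
    intro a ha b hb
    exact hind a (h1.mem_iff.mpr ha) b (h1.mem_iff.mpr hb)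

end Helpers

section Algo

variable [DecidableEq α] {D : α → α → Prop}

/-- `a` depends on some letter of the clique `A`. -/
def dep (D : α → α → Prop) (a : α) (A : Clique D) : Prop := ∃ b ∈ A.1, D a b

def sing (D : α → α → Prop) (a : α) : Clique D :=
  ⟨{a}, ⟨Finset.singleton_nonempty a, by simp⟩⟩

def addC (hsymm : Symmetric D) (a : α) (A : Clique D) (h : ¬ dep D a A) : Clique D :=
  ⟨insert a A.1, ⟨Finset.insert_nonempty _ _, by
    intro x hx y hy hxy
    simp only [Finset.mem_insert] at hx hy
    rcases hx with rfl | hx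
    · rcases hy with rfl | hy
      · exact absurd rfl hxy
      · exact fun hd => h ⟨y, hy, hd⟩
    · rcases hy with rfl | hy
      · exact fun hd => h ⟨x, hx, hsymm hd⟩
      · exact A.2.2 x hx y hy hxy⟩⟩

open Classical in
noncomputable def ins (hsymm : Symmetric D) (a : α) : List (Clique D) → List (Clique D)
  | [] => [sing D a]
  | [A] => if h : dep D a A then [sing D a, A] else [addC hsymm a A h]
  | A :: B :: r =>
      if h : dep D a A then sing D a :: A :: B :: r
      else if dep D a B then addC hsymm a A h :: B :: r
      else A :: ins hsymm a (B :: r)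

noncomputable def nf (hsymm : Symmetric D) (u : List α) : List (Clique D) :=
  u.foldl (fun s c => ins hsymm c s) []

noncomputable def flat (rw : List (Clique D)) : List α := cliqueFlat rw.reverse

theorem flat_nil : flat ([] : List (Clique D)) = [] := by simp [flat, cliqueFlat]

theorem flat_cons (A : Clique D) (rest : List (Clique D)) :
    flat (A :: rest) = flat rest ++ A.1.toList := by
  simp [flat, cliqueFlat]

theorem ins_ne_nil (hsymm : Symmetric D) (a : α) (rw : List (Clique D)) :
    ins hsymm a rw ≠ [] := by
  match rw with
  | [] => simp [ins]
  | [A] => by_cases h : dep D a A <;> simp [ins, h]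
  | A :: B :: r =>
    by_cases h : dep D a A
    · simp [ins, h]
    · by_cases h2 : dep D a B <;> simp [ins, h, h2]

theorem ins_head (hsymm : Symmetric D) (a : α) (B : Clique D) (r : List (Clique D))
    (h : ¬ dep D a B) :
    ∃ C rr, ins hsymm a (B :: r) = C :: rr ∧ B.1 ⊆ C.1 := by
  match r with
  | [] => exact ⟨addC hsymm a B h, [], by simp [ins, h], by simp [addC]⟩
  | B' :: r' =>
    by_cases h2 : dep D a B'
    · exact ⟨addC hsymm a B h, B' :: r', by simp [ins, h, h2], by simp [addC]⟩
    · exact ⟨B, ins hsymm a (B' :: r'), by simp [ins, h, h2], subset_rfl⟩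

end Algo

section Main

set_option linter.unusedSectionVars false

variable [DecidableEq α] {D : α → α → Prop}

theorem dep_of_rhd {A B : Clique D} (hsymm : Symmetric D) (h : Rhd D B A)
    {a : α} (ha : a ∈ A.1) : dep D a B := by
  obtain ⟨b, hb, hd⟩ := h a ha
  exact ⟨b, hb, hsymm hd⟩

theorem rhd_sing (hsymm : Symmetric D) {a : α} {A : Clique D} (h : dep D a A) :
    Rhd D A (sing D a) := by
  intro b hb
  simp [sing] at hb
  subst hb
  obtain ⟨c, hc, hd⟩ := h
  exact ⟨c, hc, hsymm hd⟩

theorem rhd_addC (hsymm : Symmetric D) {a : α} {A B : Clique D} (hAB : Rhd D B A)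
    (h : ¬ dep D a A) (hd : dep D a B) : Rhd D B (addC hsymm a A h) := by
  intro x hx
  simp [addC, Finset.mem_insert] at hx
  rcases hx with rfl | hx
  · obtain ⟨c, hc, hdc⟩ := hd
    exact ⟨c, hc, hsymm hdc⟩
  · exact hAB x hx

theorem chain'_ins (hsymm : Symmetric D) (a : α) {rw : List (Clique D)}
    (h : rw.Chain' (flip (Rhd D))) : (ins hsymm a rw).Chain' (flip (Rhd D)) := by
  induction rw with
  | nil => simp [ins]; exact List.isChain_singleton _
  | cons A rest ih =>
    match rest with
    | [] =>
      by_cases hd : dep D a A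
      · simp only [ins, dif_pos hd]
        exact List.isChain_cons_cons.mpr ⟨rhd_sing hsymm hd, List.isChain_singleton A⟩
      · simp only [ins, dif_neg hd]
        exact List.isChain_singleton _
    | B :: r =>
      have hchain : (B :: r).Chain' (flip (Rhd D)) := (List.isChain_cons_cons.mp h).2
      have hRB : Rhd D B A := (List.isChain_cons_cons.mp h).1
      by_cases hd : dep D a A
      · simp only [ins, dif_pos hd]
        exact List.isChain_cons_cons.mpr ⟨rhd_sing hsymm hd, h⟩
      · by_cases hd2 : dep D a B
        · simp only [ins, dif_neg hd, if_pos hd2]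
          exact List.isChain_cons_cons.mpr ⟨rhd_addC hsymm hRB hd hd2, hchain⟩
        · simp only [ins, dif_neg hd, if_neg hd2]
          obtain ⟨C, rr, heq, hsub⟩ := ins_head hsymm a B r hd2
          rw [heq]
          refine List.isChain_cons_cons.mpr ⟨?_, ?_⟩
          · intro x hx
            obtain ⟨c, hc, hdc⟩ := hRB x hx
            exact ⟨c, hsub hc, hdc⟩
          · rw [← heq]; exact ih hchain

theorem flat_ins (hrefl : Reflexive D) (hsymm : Symmetric D) (a : α)
    (rw : List (Clique D)) :
    TraceEquiv D (flat (ins hsymm a rw)) (flat rw ++ [a]) := by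
  induction rw with
  | nil =>
    simp only [ins, flat_cons, flat_nil]
    simp [sing]
    exact Relation.EqvGen.refl _
  | cons A rest ih =>
    have hindep : ∀ (h : ¬ dep D a A),
        TraceEquiv D ((addC hsymm a A h).1.toList) (A.1.toList ++ [a]) := by
      intro h
      have hnotmem : a ∉ A.1 := fun hm => h ⟨a, hm, hrefl a⟩
      have hperm : (addC hsymm a A h).1.toList.Perm (A.1.toList ++ [a]) := by
        refine (Finset.toList_insert hnotmem).trans ?_
        exact (List.perm_append_singleton a A.1.toList).symm
      refine te_of_perm hperm ?_
      intro x hx y hy hxy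
      have hx' : x ∈ (addC hsymm a A h).1 := by simpa [Finset.mem_toList] using hx
      have hy' : y ∈ (addC hsymm a A h).1 := by simpa [Finset.mem_toList] using hy
      exact (addC hsymm a A h).2.2 x hx' y hy' hxy
    match rest with
    | [] =>
      by_cases hd : dep D a A
      · simp only [ins, dif_pos hd, flat_cons, flat_nil]
        simp [sing]
        exact Relation.EqvGen.refl _
      · simp only [ins, dif_neg hd, flat_cons, flat_nil]
        simpa using hindep hd
    | B :: r =>
      by_cases hd : dep D a A
      · simp only [ins, dif_pos hd, flat_cons, flat_nil]
        simp [sing]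
        exact Relation.EqvGen.refl _
      · by_cases hd2 : dep D a B
        · simp only [ins, dif_neg hd, if_pos hd2, flat_cons]
          have := te_left (flat r ++ B.1.toList) (hindep hd)
          simpa [List.append_assoc] using this
        · simp only [ins, dif_neg hd, if_neg hd2, flat_cons]
          refine Relation.EqvGen.trans _ ((flat (B :: r) ++ [a]) ++ A.1.toList) _
            (te_right _ ih) ?_
          have hindepA : ∀ b ∈ A.1.toList, ¬ D a b := by
            intro b hb hdb
            exact hd ⟨b, by simpa [Finset.mem_toList] using hb, hdb⟩
          have hb : TraceEquiv D ([a] ++ A.1.toList) (A.1.toList ++ [a]) := by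
            simpa using te_bubble (D := D) ([] : List α) hindepA
          have := te_left (flat (B :: r)) hb
          simpa [List.append_assoc, flat_cons] using this


theorem foldl_ins_build (hsymm : Symmetric D) :
    ∀ (l : List α) (S : Clique D) (rw : List (Clique D)) (C : Clique D),
      (∀ c ∈ l, ∀ b ∈ S.1, ¬ D c b) →
      l.Pairwise (fun x y => ¬ D x y) →
      (∀ c ∈ l, ∀ B, rw.head? = some B → dep D c B) →
      C.1 = S.1 ∪ l.toFinset →
      List.foldl (fun s c => ins hsymm c s) (S :: rw) l = C :: rw := by
  intro l
  induction l with
  | nil =>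
    intro S rw C _ _ _ hC
    simp only [List.foldl_nil]
    have : C = S := Subtype.ext (by simpa using hC)
    rw [this]
  | cons c l ih =>
    intro S rw C hS hpw hhead hC
    have hndep : ¬ dep D c S := by
      rintro ⟨b, hb, hdb⟩
      exact hS c (by simp) b hb hdb
    have hstep : ins hsymm c (S :: rw) = addC hsymm c S hndep :: rw := by
      match rw with
      | [] => simp [ins, hndep]
      | B :: r =>
        have : dep D c B := hhead c (by simp) B rfl
        simp [ins, hndep, this]
    simp only [List.foldl_cons, hstep]
    refine ih (addC hsymm c S hndep) rw C ?_ hpw.tail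
      (fun c' hc' => hhead c' (by simp [hc'])) ?_
    · intro c' hc' b hb
      simp only [addC, Finset.mem_insert] at hb
      rcases hb with rfl | hb
      · intro hd
        exact (List.pairwise_cons.mp hpw).1 c' hc' (hsymm hd)
      · exact hS c' (by simp [hc']) b hb
    · rw [hC]
      simp only [addC]
      ext x
      simp only [Finset.mem_insert, Finset.mem_union, List.mem_toFinset, List.mem_cons]
      tauto

theorem nf_flat (hsymm : Symmetric D) :
    ∀ (rw : List (Clique D)), rw.Chain' (flip (Rhd D)) →
      nf hsymm (flat rw) = rw := by
  intro rw
  induction rw with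
  | nil => simp [nf, flat_nil]
  | cons A rest ih =>
    intro hchain
    have hrest : rest.Chain' (flip (Rhd D)) := hchain.tail
    have hdep : ∀ c ∈ A.1, ∀ B, rest.head? = some B → dep D c B := by
      intro c hc B hB
      have : flip (Rhd D) A B := by
        cases rest with
        | nil => simp at hB
        | cons B' r' =>
          simp at hB
          subst hB
          exact (List.isChain_cons_cons.mp hchain).1
      exact dep_of_rhd hsymm this hc
    obtain ⟨c, l, hl⟩ : ∃ c l, A.1.toList = c :: l := by
      rcases A.2.1 with ⟨a, ha⟩
      cases htl : A.1.toList with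
      | nil => exact absurd (Finset.mem_toList.mpr ha) (by simp [htl])
      | cons c l => exact ⟨c, l, rfl⟩
    have hmem : ∀ x ∈ c :: l, x ∈ A.1 := by
      intro x hx
      rw [← hl] at hx
      exact Finset.mem_toList.mp hx
    have hnd : (c :: l).Pairwise (fun x y => ¬ D x y) := by
      have : (c :: l).Nodup := hl ▸ A.1.nodup_toList
      exact this.imp_of_mem (fun hx hy hne => A.2.2 _ (hmem _ hx) _ (hmem _ hy) hne)
    rw [nf, flat_cons, List.foldl_append, ← nf, ih hrest, hl, List.foldl_cons]
    have hins : ins hsymm c rest = sing D c :: rest := by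
      match rest with
      | [] => simp [ins]
      | B :: r =>
        have hd : dep D c B := hdep c (hmem c (by simp)) B rfl
        match r with
        | [] => simp [ins, hd]
        | _ :: _ => simp [ins, hd]
    rw [hins]
    refine foldl_ins_build hsymm l (sing D c) rest A ?_ hnd.tail
      (fun c' hc' => hdep c' (hmem c' (by simp [hc']))) ?_
    · intro c' hc' b hb
      simp only [sing, Finset.mem_singleton] at hb
      rw [hb]
      have hne : c' ≠ c := by
        have hnod : (c :: l).Nodup := hl ▸ A.1.nodup_toList
        rintro rfl
        exact (List.nodup_cons.mp hnod).1 hc'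
      exact A.2.2 c' (hmem c' (by simp [hc'])) c (hmem c (by simp)) hne
    · have : A.1 = (c :: l).toFinset := by
        rw [← hl]; exact (Finset.toList_toFinset A.1).symm
      rw [this]
      simp only [sing, List.toFinset_cons]
      ext x
      simp only [Finset.mem_insert, Finset.mem_union, Finset.mem_singleton]


theorem dep_sing_iff {x a : α} : dep D x (sing D a) ↔ D x a := by
  simp [dep, sing]

theorem dep_addC_iff (hsymm : Symmetric D) {x a : α} {A : Clique D} {h : ¬ dep D a A} :
    dep D x (addC hsymm a A h) ↔ D x a ∨ dep D x A := by
  simp only [dep, addC, Finset.mem_insert]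
  constructor
  · rintro ⟨y, rfl | hy, hd⟩
    · exact Or.inl hd
    · exact Or.inr ⟨y, hy, hd⟩
  · rintro (hd | ⟨y, hy, hd⟩)
    · exact ⟨a, Or.inl rfl, hd⟩
    · exact ⟨y, Or.inr hy, hd⟩

theorem addC_sing_comm (hsymm : Symmetric D) {a b : α} (h1 : ¬ dep D b (sing D a))
    (h2 : ¬ dep D a (sing D b)) :
    addC hsymm b (sing D a) h1 = addC hsymm a (sing D b) h2 := by
  apply Subtype.ext
  simp only [addC, sing]
  exact Finset.insert_comm b a ∅

theorem addC_addC_comm (hsymm : Symmetric D) {a b : α} {A : Clique D}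
    {ha : ¬ dep D a A} {hb : ¬ dep D b A}
    (h1 : ¬ dep D b (addC hsymm a A ha)) (h2 : ¬ dep D a (addC hsymm b A hb)) :
    addC hsymm b (addC hsymm a A ha) h1 = addC hsymm a (addC hsymm b A hb) h2 := by
  apply Subtype.ext
  simp only [addC]
  exact Finset.insert_comm b a A.1

section Ev
variable (hsymm : Symmetric D) {a : α} {A B : Clique D} {r : List (Clique D)}

theorem ev0 : ins hsymm a [] = [sing D a] := by simp [ins]

theorem ev1p (h : dep D a A) : ins hsymm a [A] = [sing D a, A] := by simp [ins, h]

theorem ev1n (h : ¬ dep D a A) : ins hsymm a [A] = [addC hsymm a A h] := by simp [ins, h]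

theorem ev2p (h : dep D a A) : ins hsymm a (A :: B :: r) = sing D a :: A :: B :: r := by
  simp [ins, h]

theorem ev2n (h : ¬ dep D a A) (h2 : dep D a B) :
    ins hsymm a (A :: B :: r) = addC hsymm a A h :: B :: r := by simp [ins, h, h2]

theorem ev2nn (h : ¬ dep D a A) (h2 : ¬ dep D a B) :
    ins hsymm a (A :: B :: r) = A :: ins hsymm a (B :: r) := by simp [ins, h, h2]

end Ev


theorem ins_head' (hsymm : Symmetric D) (a : α) (B : Clique D) (r : List (Clique D))
    (h : ¬ dep D a B) :
    ∃ C rr, ins hsymm a (B :: r) = C :: rr ∧ (C = B ∨ C = addC hsymm a B h) := by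
  match r with
  | [] => exact ⟨addC hsymm a B h, [], ev1n hsymm h, Or.inr rfl⟩
  | B' :: r' =>
    by_cases h2 : dep D a B'
    · exact ⟨addC hsymm a B h, B' :: r', ev2n hsymm h h2, Or.inr rfl⟩
    · exact ⟨B, ins hsymm a (B' :: r'), ev2nn hsymm h h2, Or.inl rfl⟩

theorem ins_comm (hsymm : Symmetric D) {a b : α} (hab : ¬ D a b) :
    ∀ rw : List (Clique D), ins hsymm b (ins hsymm a rw) = ins hsymm a (ins hsymm b rw) := by
  have hba : ¬ D b a := fun h => hab (hsymm h)
  have ndbs : ¬ dep D b (sing D a) := fun h => hba (dep_sing_iff.mp h)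
  have ndas : ¬ dep D a (sing D b) := fun h => hab (dep_sing_iff.mp h)
  intro rw
  induction rw with
  | nil =>
    rw [ev0, ev0, ev1n hsymm ndbs, ev1n hsymm ndas, addC_sing_comm hsymm ndbs ndas]
  | cons A rest ih =>
    have ndba : ∀ (h : ¬ dep D a A), ¬ dep D b (addC hsymm a A h) → True := fun _ _ => trivial
    cases rest with
    | nil =>
      by_cases da : dep D a A <;> by_cases db : dep D b A
      · rw [ev1p hsymm da, ev2n hsymm ndbs db, ev1p hsymm db, ev2n hsymm ndas da,
          addC_sing_comm hsymm ndbs ndas]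
      · rw [ev1p hsymm da, ev2nn hsymm ndbs db, ev1n hsymm db,
          ev1p hsymm (dep_addC_iff hsymm |>.mpr (Or.inr da))]
      · rw [ev1n hsymm da, ev1p hsymm (dep_addC_iff hsymm |>.mpr (Or.inr db)),
          ev1p hsymm db, ev2nn hsymm ndas da, ev1n hsymm da]
      · have h1 : ¬ dep D b (addC hsymm a A da) := by
          rw [dep_addC_iff hsymm]; rintro (h | h); exacts [hba h, db h]
        have h2 : ¬ dep D a (addC hsymm b A db) := by
          rw [dep_addC_iff hsymm]; rintro (h | h); exacts [hab h, da h]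
        rw [ev1n hsymm da, ev1n hsymm h1, ev1n hsymm db, ev1n hsymm h2,
          addC_addC_comm hsymm h1 h2]
    | cons C r' =>
      by_cases da : dep D a A <;> by_cases db : dep D b A
      · rw [ev2p hsymm da, ev2n hsymm ndbs db, ev2p hsymm db, ev2n hsymm ndas da,
          addC_sing_comm hsymm ndbs ndas]
      · -- da, ¬db
        rw [ev2p hsymm da, ev2nn hsymm ndbs db]
        by_cases dbc : dep D b C
        · rw [ev2n hsymm db dbc, ev2p hsymm (dep_addC_iff hsymm |>.mpr (Or.inr da))]
        · rw [ev2nn hsymm db dbc]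
          obtain ⟨C₂, r₂, heq⟩ := List.exists_cons_of_ne_nil (ins_ne_nil hsymm b (C :: r'))
          rw [heq, ev2p hsymm da]
      · -- ¬da, db
        rw [ev2p hsymm db, ev2nn hsymm ndas da]
        by_cases dac : dep D a C
        · rw [ev2n hsymm da dac, ev2p hsymm (dep_addC_iff hsymm |>.mpr (Or.inr db))]
        · rw [ev2nn hsymm da dac]
          obtain ⟨C₂, r₂, heq⟩ := List.exists_cons_of_ne_nil (ins_ne_nil hsymm a (C :: r'))
          rw [heq, ev2p hsymm db]
      · -- ¬da, ¬db
        have h1 : ¬ dep D b (addC hsymm a A da) := by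
          rw [dep_addC_iff hsymm]; rintro (h | h); exacts [hba h, db h]
        have h2 : ¬ dep D a (addC hsymm b A db) := by
          rw [dep_addC_iff hsymm]; rintro (h | h); exacts [hab h, da h]
        by_cases dac : dep D a C <;> by_cases dbc : dep D b C
        · rw [ev2n hsymm da dac, ev2n hsymm h1 dbc, ev2n hsymm db dbc,
            ev2n hsymm h2 dac, addC_addC_comm hsymm h1 h2]
        · -- dac, ¬dbc
          rw [ev2n hsymm da dac, ev2nn hsymm h1 dbc, ev2nn hsymm db dbc]
          obtain ⟨C₂, r₂, heq, hC₂⟩ := ins_head' hsymm b C r' dbc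
          have hdaC₂ : dep D a C₂ := by
            rcases hC₂ with rfl | rfl
            · exact dac
            · exact (dep_addC_iff hsymm).mpr (Or.inr dac)
          rw [heq, ev2n hsymm da hdaC₂]
        · -- ¬dac, dbc
          rw [ev2n hsymm db dbc, ev2nn hsymm h2 dac, ev2nn hsymm da dac]
          obtain ⟨C₂, r₂, heq, hC₂⟩ := ins_head' hsymm a C r' dac
          have hdbC₂ : dep D b C₂ := by
            rcases hC₂ with rfl | rfl
            · exact dbc
            · exact (dep_addC_iff hsymm).mpr (Or.inr dbc)
          rw [heq, ev2n hsymm db hdbC₂]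
        · -- ¬dac, ¬dbc
          rw [ev2nn hsymm da dac, ev2nn hsymm db dbc]
          obtain ⟨C₂, r₂, heq, hC₂⟩ := ins_head' hsymm a C r' dac
          have hnbC₂ : ¬ dep D b C₂ := by
            rcases hC₂ with rfl | rfl
            · exact dbc
            · rw [dep_addC_iff hsymm]; rintro (h | h); exacts [hba h, dbc h]
          obtain ⟨C₃, r₃, heq', hC₃⟩ := ins_head' hsymm b C r' dbc
          have hnaC₃ : ¬ dep D a C₃ := by
            rcases hC₃ with rfl | rfl
            · exact dac
            · rw [dep_addC_iff hsymm]; rintro (h | h); exacts [hab h, dac h]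
          rw [heq, ev2nn hsymm db hnbC₂, ← heq, heq', ev2nn hsymm da hnaC₃, ← heq', ih]


theorem nf_equiv (hsymm : Symmetric D) {v v' : List α} (h : TraceEquiv D v v') :
    nf hsymm v = nf hsymm v' := by
  induction h with
  | rel x y hxy =>
    rcases hxy with ⟨x, y, a, b, hab⟩
    simp only [nf, List.foldl_append, List.foldl_cons]
    rw [ins_comm hsymm hab]
  | refl _ => rfl
  | symm _ _ _ ih => exact ih.symm
  | trans _ _ _ _ _ ih1 ih2 => exact ih1.trans ih2

theorem chain'_foldl_ins (hsymm : Symmetric D) :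
    ∀ (u : List α) (rw : List (Clique D)), rw.Chain' (flip (Rhd D)) →
      (List.foldl (fun s c => ins hsymm c s) rw u).Chain' (flip (Rhd D)) := by
  intro u
  induction u with
  | nil => intro rw h; exact h
  | cons a u ih =>
    intro rw h
    exact ih (ins hsymm a rw) (chain'_ins hsymm a h)

theorem flat_foldl (hrefl : Reflexive D) (hsymm : Symmetric D) :
    ∀ (u : List α) (rw : List (Clique D)),
      TraceEquiv D (flat (List.foldl (fun s c => ins hsymm c s) rw u)) (flat rw ++ u) := by
  intro u
  induction u with
  | nil => intro rw; simpa using Relation.EqvGen.refl (r := TraceStep D) (flat rw)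
  | cons a u ih =>
    intro rw
    simp only [List.foldl_cons]
    refine Relation.EqvGen.trans _ (flat (ins hsymm a rw) ++ u) _ (ih _) ?_
    have := te_right (D := D) u (flat_ins hrefl hsymm a rw)
    simpa [List.append_assoc] using this

end Main

/-- every trace has a unique Foata normal form: for each word
`u ∈ Σ*` there is exactly one word `A₁ ⋯ A_p ∈ Foata` whose image under the
canonical morphism is the trace `[u]`. -/
theorem foata_normal_form_exists_unique [Fintype α] [DecidableEq α]
    (D : α → α → Prop) (hrefl : Reflexive D) (hsymm : Symmetric D)
    (u : List α) :
    ∃! w : List (Clique D), w ∈ Foata D ∧ TraceEquiv D (cliqueFlat w) u := by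
  refine ⟨(nf hsymm u).reverse, ⟨?_, ?_⟩, ?_⟩
  · show ((nf hsymm u).reverse).Chain' (Rhd D)
    exact List.isChain_reverse.mpr (chain'_foldl_ins hsymm u [] List.isChain_nil)
  · have h := flat_foldl hrefl hsymm u []
    simp only [flat_nil, List.nil_append] at h
    exact h
  · rintro w' ⟨hF, hE⟩
    have hF' : w'.Chain' (Rhd D) := hF
    have hc : (w'.reverse).Chain' (flip (Rhd D)) := List.isChain_reverse.mpr hF'
    have h1 : nf hsymm (flat w'.reverse) = w'.reverse := nf_flat hsymm w'.reverse hc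
    have h2 : flat w'.reverse = cliqueFlat w' := by simp [flat]
    rw [h2] at h1
    have h3 : nf hsymm (cliqueFlat w') = nf hsymm u := nf_equiv hsymm hE
    rw [h3] at h1
    rw [h1, List.reverse_reverse]
end

section
/- Compatibility of concatenation with Foata normal forms: let s, t ∈ M(Σ, D) with Foata normal forms ⟨s⟩ = A₁⋯A_p and ⟨st⟩ = B₁⋯B_m. Then m ≥ p, A_i ⊆ B_i for each 1 ≤ i ≤ p, and Π((B₁\A₁)⋯(B_p\A_p)B_{p+1}⋯B_m) = t. -/
variable {α : Type*}

/-- `Π` extended to words over possibly-empty sets of letters (`Π(∅) = ε`). -/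
noncomputable def setFlat (w : List (Finset α)) : List α :=
  (w.map Finset.toList).flatten

section Aux

variable {D : α → α → Prop}

theorem TraceEquiv.cons (a : α) {u v : List α} (h : TraceEquiv D u v) :
    TraceEquiv D (a :: u) (a :: v) := by
  induction h with
  | rel x y hxy =>
    obtain ⟨x, y, p, q, hpq⟩ := hxy
    exact Relation.EqvGen.rel _ _ (by simpa using TraceStep.swap (a :: x) y p q hpq)
  | refl x => exact Relation.EqvGen.refl _
  | symm x y _ ih => exact Relation.EqvGen.symm _ _ ih
  | trans x y z _ _ ih1 ih2 => exact Relation.EqvGen.trans _ _ _ ih1 ih2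

theorem TraceEquiv.append_left (w : List α) {u v : List α} (h : TraceEquiv D u v) :
    TraceEquiv D (w ++ u) (w ++ v) := by
  induction w with
  | nil => simpa using h
  | cons a w ih => exact ih.cons a

theorem TraceEquiv.append_right (w : List α) {u v : List α} (h : TraceEquiv D u v) :
    TraceEquiv D (u ++ w) (v ++ w) := by
  induction h with
  | rel x y hxy =>
    obtain ⟨x, y, p, q, hpq⟩ := hxy
    refine Relation.EqvGen.rel _ _ ?_
    have := TraceStep.swap x (y ++ w) p q hpq
    simpa using this
  | refl x => exact Relation.EqvGen.refl _
  | symm x y _ ih => exact Relation.EqvGen.symm _ _ ih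
  | trans x y z _ _ ih1 ih2 => exact Relation.EqvGen.trans _ _ _ ih1 ih2

theorem TraceEquiv.append {u v u' v' : List α} (h : TraceEquiv D u v)
    (h' : TraceEquiv D u' v') : TraceEquiv D (u ++ u') (v ++ v') :=
  Relation.EqvGen.trans _ _ _ (h.append_right u') (h'.append_left v)

/-- pull a letter to the front across independent letters -/
theorem trace_pull (hsymm : Symmetric D) {b : α} {x : List α}
    (hx : ∀ c ∈ x, ¬ D b c) (y : List α) :
    TraceEquiv D (b :: (x ++ y)) (x ++ b :: y) := by
  induction x with
  | nil => exact Relation.EqvGen.refl _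
  | cons c x ih =>
    have h1 : TraceEquiv D (b :: c :: (x ++ y)) (c :: b :: (x ++ y)) := by
      have hcb : ¬ D b c := hx c (by simp)
      exact Relation.EqvGen.rel _ _
        (by simpa using TraceStep.swap ([] : List α) (x ++ y) b c hcb)
    refine Relation.EqvGen.trans _ _ _ h1 ?_
    exact (ih (fun c hc => hx c (by simp [hc]))).cons c

end Aux

section Proj

variable [DecidableEq α] {D : α → α → Prop}

/-- projection onto the pair of letters `{b, c}` -/
def pj (b c : α) (w : List α) : List α :=
  w.filter (fun x => decide (x = b ∨ x = c))

theorem pj_append (b c : α) (u v : List α) :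
    pj b c (u ++ v) = pj b c u ++ pj b c v :=
  List.filter_append _ _

theorem pj_cons (b c a : α) (u : List α) :
    pj b c (a :: u) = if a = b ∨ a = c then a :: pj b c u else pj b c u := by
  by_cases h : a = b ∨ a = c <;> simp [pj, h]

theorem mem_pj {b c x : α} {w : List α} (hx : x ∈ pj b c w) :
    x ∈ w ∧ (x = b ∨ x = c) := by
  have := List.of_mem_filter hx
  exact ⟨List.mem_of_mem_filter hx, by simpa using this⟩

theorem pj_invariant (hrefl : Reflexive D) (hsymm : Symmetric D)
    {p q : α} (hpq : D p q) {u v : List α} (h : TraceEquiv D u v) :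
    pj p q u = pj p q v := by
  induction h with
  | rel x y hxy =>
    obtain ⟨x, y, a, b, hab⟩ := hxy
    have key : pj p q (a :: b :: y) = pj p q (b :: a :: y) := by
      by_cases ha : a = p ∨ a = q <;> by_cases hb : b = p ∨ b = q <;>
        simp only [pj_cons, ha, hb, if_pos, if_neg, if_true, if_false]
      · exfalso
        by_cases hab' : a = b
        · exact hab (hab' ▸ hrefl a)
        · rcases ha with ha | ha <;> rcases hb with hb | hb <;> subst ha <;> subst hb
          · exact hab' rfl
          · exact hab hpq
          · exact hab (hsymm hpq)
          · exact hab' rfl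
    simp only [pj_append, key]
  | refl x => rfl
  | symm x y _ ih => exact ih.symm
  | trans x y z _ _ ih1 ih2 => exact ih1.trans ih2

theorem pj_all_eq {b c a : α} {w : List α} (haw : a ∈ w) (ha : a = b ∨ a = c)
    (hall : ∀ x ∈ w, (x = b ∨ x = c) → x = a) :
    ∃ l, pj b c w = a :: l := by
  have hmem : a ∈ pj b c w := List.mem_filter.2 ⟨haw, by simpa using ha⟩
  cases hpj : pj b c w with
  | nil => simp [hpj] at hmem
  | cons e l =>
    have he : e ∈ pj b c w := by simp [hpj]
    obtain ⟨hew, he'⟩ := mem_pj he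
    exact ⟨l, by exact congrArg (· :: l) (hall e hew he')⟩

/-- first-occurrence decomposition -/
theorem first_split {b : α} {w : List α} (h : b ∈ w) :
    ∃ x y, w = x ++ b :: y ∧ b ∉ x := by
  induction w with
  | nil => simp at h
  | cons a w ih =>
    by_cases hab : a = b
    · exact ⟨[], w, by simp [hab], by simp⟩
    · have hb : b ∈ w := by
        rcases List.mem_cons.1 h with h | h
        · exact absurd h.symm hab
        · exact h
      obtain ⟨x, y, hxy, hbx⟩ := ih hb
      exact ⟨a :: x, y, by simp [hxy], by simp [hbx]; exact fun h => hab h.symm⟩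

end Proj

section Complete

variable [DecidableEq α] {D : α → α → Prop}

theorem pj_complete (hrefl : Reflexive D) (hsymm : Symmetric D) :
    ∀ u v : List α, (∀ p q, D p q → pj p q u = pj p q v) → TraceEquiv D u v := by
  intro u
  induction u with
  | nil =>
    intro v h
    cases v with
    | nil => exact Relation.EqvGen.refl _
    | cons c v' =>
      exfalso
      have := h c c (hrefl c)
      simp [pj, pj_cons] at this
  | cons a u' ih =>
    intro v h
    have hav : a ∈ v := by
      have := h a a (hrefl a)
      rw [pj_cons] at this
      simp only [or_self, if_pos rfl] at this
      have : a ∈ pj a a v := by rw [← this]; simp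
      exact (mem_pj this).1
    obtain ⟨x, y, hv, hax⟩ := first_split hav
    -- no letter of x depends on a
    have hx : ∀ c ∈ x, ¬ D a c := by
      intro c hc hDac
      have hca : c ≠ a := fun h => hax (h ▸ hc)
      have h1 := h a c hDac
      rw [pj_cons] at h1
      simp only [or_self, if_pos (Or.inl rfl)] at h1
      -- pj a c v starts with some element of x equal to c... derive contradiction
      have h2 : ∃ l, ∃ e, pj a c v = e :: l ∧ e ≠ a := by
        rw [hv, pj_append]
        have hcx : c ∈ pj a c x := List.mem_filter.2 ⟨hc, by simp⟩
        cases hpx : pj a c x with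
        | nil => rw [hpx] at hcx; simp at hcx
        | cons e l =>
          refine ⟨l ++ pj a c (a :: y), e, by simp [hpx], ?_⟩
          have : e ∈ pj a c x := by rw [hpx]; simp
          obtain ⟨hex, he⟩ := mem_pj this
          rcases he with he | he
          · exact absurd (he ▸ hex) hax
          · exact fun h => hca (he.symm.trans h)
      obtain ⟨l, e, hpj, hea⟩ := h2
      rw [← h1] at hpj
      exact hea (by injection hpj.symm)
    have hpull : TraceEquiv D v (a :: (x ++ y)) := by
      rw [hv]
      exact Relation.EqvGen.symm _ _ (trace_pull hsymm hx y)
    have hproj : ∀ p q, D p q → pj p q u' = pj p q (x ++ y) := by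
      intro p q hpq
      have h1 := h p q hpq
      have h2 := pj_invariant hrefl hsymm hpq hpull
      rw [h2] at h1
      rw [pj_cons, pj_cons] at h1
      by_cases hap : a = p ∨ a = q
      · simp only [if_pos hap] at h1; injection h1
      · simpa only [if_neg hap] using h1
    exact Relation.EqvGen.trans _ _ _ ((ih (x ++ y) hproj).cons a)
      (Relation.EqvGen.symm _ _ hpull)

theorem trace_cancel (hrefl : Reflexive D) (hsymm : Symmetric D)
    {u w₁ w₂ : List α} (h : TraceEquiv D (u ++ w₁) (u ++ w₂)) :
    TraceEquiv D w₁ w₂ := by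
  refine pj_complete hrefl hsymm _ _ (fun p q hpq => ?_)
  have := pj_invariant hrefl hsymm hpq h
  rw [pj_append, pj_append] at this
  exact List.append_cancel_left this

/-- `b` is a minimal letter of the trace of `w`. -/
def MinP (D : α → α → Prop) [DecidableEq α] (w : List α) (b : α) : Prop :=
  ∀ c, D b c → ∃ l, pj b c w = b :: l

theorem minp_invariant (hrefl : Reflexive D) (hsymm : Symmetric D)
    {u v : List α} (h : TraceEquiv D u v) {b : α} (hb : MinP D u b) :
    MinP D v b := by
  intro c hc
  rw [← pj_invariant hrefl hsymm hc h]
  exact hb c hc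

theorem minp_front (hrefl : Reflexive D) (hsymm : Symmetric D)
    {w : List α} {b : α} (hb : MinP D w b) :
    ∃ w', TraceEquiv D w (b :: w') := by
  have hbw : b ∈ w := by
    obtain ⟨l, hl⟩ := hb b (hrefl b)
    have : b ∈ pj b b w := by rw [hl]; simp
    exact (mem_pj this).1
  obtain ⟨x, y, hw, hbx⟩ := first_split hbw
  have hx : ∀ c ∈ x, ¬ D b c := by
    intro c hc hDbc
    obtain ⟨l, hl⟩ := hb c hDbc
    have hcb : c ≠ b := fun h => hbx (h ▸ hc)
    rw [hw, pj_append] at hl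
    have hcx : c ∈ pj b c x := List.mem_filter.2 ⟨hc, by simp⟩
    cases hpx : pj b c x with
    | nil => rw [hpx] at hcx; simp at hcx
    | cons e l' =>
      have he : e ∈ pj b c x := by rw [hpx]; simp
      obtain ⟨hex, he'⟩ := mem_pj he
      have heb : e ≠ b := fun h => hbx (h ▸ hex)
      rw [hpx] at hl
      simp only [List.cons_append] at hl
      exact heb (by injection hl)
  exact ⟨x ++ y, by rw [hw]; exact Relation.EqvGen.symm _ _ (trace_pull hsymm hx y)⟩

theorem trace_commute (hsymm : Symmetric D) {u v : List α}
    (h : ∀ a ∈ u, ∀ c ∈ v, ¬ D a c) : TraceEquiv D (u ++ v) (v ++ u) := by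
  induction u with
  | nil => simp; exact Relation.EqvGen.refl _
  | cons a u' ih =>
    have h1 : TraceEquiv D (a :: (u' ++ v)) (a :: (v ++ u')) :=
      (ih (fun a ha c hc => h a (by simp [ha]) c hc)).cons a
    have h2 : TraceEquiv D (a :: (v ++ u')) (v ++ a :: u') :=
      trace_pull hsymm (fun c hc => h a (by simp) c hc) u'
    simpa using Relation.EqvGen.trans _ _ _ h1 h2

end Complete

section FoataAux

variable [DecidableEq α] {D : α → α → Prop}

theorem cliqueFlat_cons (A : Clique D) (fs : List (Clique D)) :
    cliqueFlat (A :: fs) = A.1.toList ++ cliqueFlat fs := by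
  simp [cliqueFlat]

theorem cliqueFlat_nil : cliqueFlat ([] : List (Clique D)) = [] := rfl

/-- the projection of a word starting with a clique containing `a`
starts with `a`, for any `c` depending on `a`. -/
theorem pj_clique_head {A : Clique D} {a c : α} (ha : a ∈ A.1) (hac : D a c)
    (r : List α) : ∃ l, pj a c (A.1.toList ++ r) = a :: l := by
  have hall : ∀ x ∈ A.1.toList, (x = a ∨ x = c) → x = a := by
    intro x hx h
    rcases h with h | h
    · exact h
    · subst h
      by_contra hxa
      exact A.2.2 a ha x (Finset.mem_toList.1 hx) (fun h => hxa h.symm) hac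
  obtain ⟨l, hl⟩ := pj_all_eq (Finset.mem_toList.2 ha) (Or.inl rfl) hall
  exact ⟨l ++ pj a c r, by rw [pj_append, hl]; simp⟩

/-- a letter of the first clique of a Foata form is minimal. -/
theorem minp_of_head {A : Clique D} {fs : List (Clique D)} {a : α} (ha : a ∈ A.1)
    (r : List α) : MinP D (cliqueFlat (A :: fs) ++ r) a := by
  intro c hc
  rw [cliqueFlat_cons, List.append_assoc]
  exact pj_clique_head ha hc _

/-- key lemma: a minimal letter of `Π(fs) · t` which is not in the first
clique of the Foata form `fs` is independent of all of `Π(fs)` and minimal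
in `t`. -/
theorem minp_not_head (hrefl : Reflexive D) (hsymm : Symmetric D) :
    ∀ (fs : List (Clique D)) (t : List α) (b : α), fs.Chain' (Rhd D) →
    MinP D (cliqueFlat fs ++ t) b → (∀ A ∈ fs.head?, b ∉ A.1) →
    (∀ c ∈ cliqueFlat fs, ¬ D b c) ∧ MinP D t b := by
  intro fs
  induction fs with
  | nil =>
    intro t b _ hmin _
    refine ⟨by simp [cliqueFlat_nil], ?_⟩
    simpa [cliqueFlat_nil] using hmin
  | cons A fs' ih =>
    intro t b hch hmin hhead
    have hbA : b ∉ A.1 := hhead A (by simp)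
    have step1 : ∀ c ∈ A.1, ¬ D b c := by
      intro c hc hDbc
      obtain ⟨l, hl⟩ := hmin c hDbc
      rw [cliqueFlat_cons, List.append_assoc, pj_append] at hl
      have hcb : c ≠ b := fun h => hbA (h ▸ hc)
      have hall : ∀ x ∈ A.1.toList, (x = b ∨ x = c) → x = c := by
        intro x hx h
        rcases h with h | h
        · exact absurd (Finset.mem_toList.1 (h ▸ hx)) hbA
        · exact h
      obtain ⟨l', hl'⟩ := pj_all_eq (Finset.mem_toList.2 hc) (Or.inr rfl) hall
      rw [hl'] at hl
      simp only [List.cons_append] at hl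
      exact hcb (by have := congrArg List.head? hl; simpa using this)
    have step2 : MinP D (cliqueFlat fs' ++ t) b := by
      intro c hc
      obtain ⟨l, hl⟩ := hmin c hc
      rw [cliqueFlat_cons, List.append_assoc, pj_append] at hl
      have hempty : pj b c A.1.toList = [] := by
        rw [show (pj b c (A.1.toList) = []) ↔ _ from List.filter_eq_nil_iff]
        intro x hx
        simp only [decide_eq_true_iff, not_or]
        constructor
        · exact fun h => hbA (Finset.mem_toList.1 (h ▸ hx))
        · exact fun h => step1 x (Finset.mem_toList.1 hx) (h ▸ hc)
      rw [hempty, List.nil_append] at hl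
      exact ⟨l, hl⟩
    have step3 : ∀ C ∈ fs'.head?, b ∉ C.1 := by
      intro C hC hbC
      have hrhd : Rhd D A C := (List.isChain_cons.1 hch).1 C hC
      obtain ⟨a, haA, hab⟩ := hrhd b hbC
      exact step1 a haA (hsymm hab)
    obtain ⟨ih1, ih2⟩ := ih t b hch.tail step2 step3
    refine ⟨?_, ih2⟩
    intro c hc
    rw [cliqueFlat_cons, List.mem_append] at hc
    rcases hc with hc | hc
    · exact step1 c (Finset.mem_toList.1 hc)
    · exact ih1 c hc

/-- a minimal letter belongs to the first clique. -/
theorem mem_head_of_minp (hrefl : Reflexive D) (hsymm : Symmetric D)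
    {B : Clique D} {rest : List (Clique D)} {b : α}
    (hch : (B :: rest).Chain' (Rhd D))
    (hmin : MinP D (cliqueFlat (B :: rest)) b) : b ∈ B.1 := by
  by_contra hbB
  have hmin' : MinP D (cliqueFlat (B :: rest) ++ []) b := by simpa using hmin
  obtain ⟨-, h2⟩ := minp_not_head hrefl hsymm (B :: rest) [] b hch hmin'
    (by intro A hA; simp at hA; subst hA; exact hbB)
  obtain ⟨l, hl⟩ := h2 b (hrefl b)
  simp [pj] at hl

/-- extract a list of pairwise-independent minimal letters from the front. -/
theorem extract_list (hrefl : Reflexive D) (hsymm : Symmetric D) :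
    ∀ (l : List α) (t : List α), (∀ b ∈ l, MinP D t b) →
    (∀ a ∈ l, ∀ b ∈ l, a ≠ b → ¬ D a b) → l.Nodup →
    ∃ t', TraceEquiv D t (l ++ t') := by
  intro l
  induction l with
  | nil => exact fun t _ _ _ => ⟨t, Relation.EqvGen.refl _⟩
  | cons b l' ih =>
    intro t hminall hind hnd
    obtain ⟨t₀, ht₀⟩ := minp_front hrefl hsymm (hminall b (by simp))
    have hmin' : ∀ b' ∈ l', MinP D t₀ b' := by
      intro b' hb' c hc
      have hbb' : b ≠ b' := fun h => (List.nodup_cons.1 hnd).1 (h ▸ hb')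
      have hbc : b ≠ c := by
        intro h
        subst h
        exact hind b' (by simp [hb']) b (by simp) (Ne.symm hbb') hc
      have h1 := pj_invariant hrefl hsymm hc ht₀
      obtain ⟨l, hl⟩ := hminall b' (by simp [hb']) c hc
      rw [hl] at h1
      rw [pj_cons, if_neg (by push_neg; exact ⟨hbb', hbc⟩)] at h1
      exact ⟨l, h1.symm⟩
    obtain ⟨t', ht'⟩ := ih t₀ hmin'
      (fun a ha b hb => hind a (by simp [ha]) b (by simp [hb]))
      (List.nodup_cons.1 hnd).2
    exact ⟨t', Relation.EqvGen.trans _ _ _ ht₀ (by simpa using ht'.cons b)⟩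

/-- permutations of pairwise-independent lists are trace equivalent. -/
theorem perm_equiv (hsymm : Symmetric D) {l₁ l₂ : List α} (hp : l₁.Perm l₂)
    (hind : ∀ a ∈ l₁, ∀ b ∈ l₁, a ≠ b → ¬ D a b) : TraceEquiv D l₁ l₂ := by
  induction hp with
  | nil => exact Relation.EqvGen.refl _
  | cons a _ ih =>
    exact (ih (fun x hx y hy => hind x (by simp [hx]) y (by simp [hy]))).cons a
  | swap x y l =>
    by_cases hxy : x = y
    · subst hxy; exact Relation.EqvGen.refl _
    · refine Relation.EqvGen.rel _ _ ?_
      have h : ¬ D y x := hind y (by simp) x (by simp) (fun h => hxy h.symm)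
      simpa using TraceStep.swap ([] : List α) l y x h
  | trans h1 _ ih1 ih2 =>
    refine Relation.EqvGen.trans _ _ _ (ih1 hind) (ih2 ?_)
    intro a ha b hb
    exact hind a (h1.mem_iff.2 ha) b (h1.mem_iff.2 hb)

end FoataAux

section Main

variable [DecidableEq α] {D : α → α → Prop}

theorem setFlat_eq_cliqueFlat (fst : List (Clique D)) :
    setFlat (fst.map Subtype.val) = cliqueFlat fst := by
  unfold setFlat cliqueFlat
  erw [List.map_map]
  rfl

theorem foata_main (hrefl : Reflexive D) (hsymm : Symmetric D) :
    ∀ (fs fst : List (Clique D)) (t : List α),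
    fs.Chain' (Rhd D) → fst.Chain' (Rhd D) →
    TraceEquiv D (cliqueFlat fst) (cliqueFlat fs ++ t) →
    fs.length ≤ fst.length ∧
    (∀ (i : ℕ) (hi : i < fs.length) (hi' : i < fst.length),
      (fs.get ⟨i, hi⟩).1 ⊆ (fst.get ⟨i, hi'⟩).1) ∧
    TraceEquiv D
      (setFlat (List.zipWith (fun A B => B.1 \ A.1) fs fst ++
        ((fst.drop fs.length).map Subtype.val))) t := by
  intro fs
  induction fs with
  | nil =>
    intro fst t _ _ hequiv
    refine ⟨by simp, by intro i hi; simp at hi, ?_⟩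
    simp only [show List.zipWith (fun (A B : Clique D) => B.1 \ A.1) [] fst = [] from rfl,
      List.nil_append, List.length_nil, List.drop_zero]
    rw [setFlat_eq_cliqueFlat]
    simpa [cliqueFlat_nil] using hequiv
  | cons A fs' ih =>
    intro fst t hchs hcht hequiv
    -- every letter of A is minimal in the trace of fst
    have hminA : ∀ a ∈ A.1, MinP D (cliqueFlat fst) a := by
      intro a ha
      exact minp_invariant hrefl hsymm (Relation.EqvGen.symm _ _ hequiv)
        (minp_of_head ha t)
    -- fst is nonempty
    cases fst with
    | nil =>
      exfalso
      obtain ⟨a, ha⟩ := A.2.1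
      obtain ⟨l, hl⟩ := hminA a ha a (hrefl a)
      simp [cliqueFlat_nil, pj] at hl
    | cons B fst'' =>
      have hAB : A.1 ⊆ B.1 := by
        intro a ha
        exact mem_head_of_minp hrefl hsymm hcht (hminA a ha)
      -- letters of B \ A are independent of s and minimal in t
      have hBd : ∀ b ∈ B.1 \ A.1,
          (∀ c ∈ cliqueFlat (A :: fs'), ¬ D b c) ∧ MinP D t b := by
        intro b hb
        obtain ⟨hbB, hbA⟩ := Finset.mem_sdiff.1 hb
        have h1 : MinP D (cliqueFlat (B :: fst'')) b := by
          have := minp_of_head (fs := fst'') hbB []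
          simpa using this
        have h2 : MinP D (cliqueFlat (A :: fs') ++ t) b :=
          minp_invariant hrefl hsymm hequiv h1
        exact minp_not_head hrefl hsymm (A :: fs') t b hchs h2
          (by intro C hC; simp only [List.head?_cons, Option.mem_some_iff] at hC
              subst hC; exact hbA)
      -- extract B \ A from the front of t
      obtain ⟨t'', ht''⟩ := extract_list hrefl hsymm (B.1 \ A.1).toList t
        (fun b hb => (hBd b (Finset.mem_toList.1 hb)).2)
        (fun a ha b hb hab => B.2.2 a (Finset.mem_sdiff.1 (Finset.mem_toList.1 ha)).1
          b (Finset.mem_sdiff.1 (Finset.mem_toList.1 hb)).1 hab)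
        (Finset.nodup_toList _)
      -- B.toList is trace equivalent to A.toList ++ (B \ A).toList
      have hperm : B.1.toList.Perm (A.1.toList ++ (B.1 \ A.1).toList) := by
        refine List.perm_of_nodup_nodup_toFinset_eq (Finset.nodup_toList _) ?_ ?_
        · refine List.Nodup.append (Finset.nodup_toList _) (Finset.nodup_toList _) ?_
          intro x hx hx'
          exact (Finset.mem_sdiff.1 (Finset.mem_toList.1 hx')).2 (Finset.mem_toList.1 hx)
        · ext x
          simp only [List.mem_toFinset, Finset.mem_toList, List.mem_append,
            Finset.mem_sdiff]
          constructor
          · intro hx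
            by_cases h : x ∈ A.1
            · exact Or.inl h
            · exact Or.inr ⟨hx, h⟩
          · rintro (hx | ⟨hx, -⟩)
            · exact hAB hx
            · exact hx
      have hBsplit : TraceEquiv D B.1.toList (A.1.toList ++ (B.1 \ A.1).toList) := by
        refine perm_equiv hsymm hperm ?_
        intro a ha b hb hab
        exact B.2.2 a (Finset.mem_toList.1 ha) b (Finset.mem_toList.1 hb) hab
      -- the main chain of equivalences
      have hcomm : TraceEquiv D (cliqueFlat fs' ++ (B.1 \ A.1).toList)
          ((B.1 \ A.1).toList ++ cliqueFlat fs') := by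
        refine trace_commute hsymm ?_
        intro a ha c hc hD
        exact (hBd c (Finset.mem_toList.1 hc)).1 a
          (by rw [cliqueFlat_cons]; exact List.mem_append.2 (Or.inr ha)) (hsymm hD)
      have hchain : TraceEquiv D
          ((A.1.toList ++ (B.1 \ A.1).toList) ++ cliqueFlat fst'')
          ((A.1.toList ++ (B.1 \ A.1).toList) ++ (cliqueFlat fs' ++ t'')) := by
        have e1 : TraceEquiv D ((A.1.toList ++ (B.1 \ A.1).toList) ++ cliqueFlat fst'')
            (cliqueFlat (B :: fst'')) := by
          rw [cliqueFlat_cons]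
          exact TraceEquiv.append_right _ (Relation.EqvGen.symm _ _ hBsplit)
        have e2 : TraceEquiv D (cliqueFlat (A :: fs') ++ t)
            (A.1.toList ++ (cliqueFlat fs' ++ ((B.1 \ A.1).toList ++ t''))) := by
          rw [cliqueFlat_cons, List.append_assoc]
          exact TraceEquiv.append_left (A.1.toList) (TraceEquiv.append_left (cliqueFlat fs') ht'')
        have e3 : TraceEquiv D
            (A.1.toList ++ (cliqueFlat fs' ++ ((B.1 \ A.1).toList ++ t'')))
            ((A.1.toList ++ (B.1 \ A.1).toList) ++ (cliqueFlat fs' ++ t'')) := by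
          have : TraceEquiv D (cliqueFlat fs' ++ ((B.1 \ A.1).toList ++ t''))
              ((B.1 \ A.1).toList ++ (cliqueFlat fs' ++ t'')) := by
            have := TraceEquiv.append_right t'' hcomm
            simpa [List.append_assoc] using this
          have := TraceEquiv.append_left (A.1.toList) this
          simpa [List.append_assoc] using this
        exact Relation.EqvGen.trans _ _ _ e1
          (Relation.EqvGen.trans _ _ _ hequiv (Relation.EqvGen.trans _ _ _ e2 e3))
      have hcancel : TraceEquiv D (cliqueFlat fst'') (cliqueFlat fs' ++ t'') :=
        trace_cancel hrefl hsymm hchain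
      obtain ⟨ih1, ih2, ih3⟩ := ih fst'' t'' hchs.tail hcht.tail hcancel
      refine ⟨Nat.succ_le_succ ih1, ?_, ?_⟩
      · intro i hi hi'
        cases i with
        | zero => exact hAB
        | succ n =>
          exact ih2 n (Nat.lt_of_succ_lt_succ hi) (Nat.lt_of_succ_lt_succ hi')
      · have hz : List.zipWith (fun (A B : Clique D) => B.1 \ A.1) (A :: fs') (B :: fst'')
            = (B.1 \ A.1) :: List.zipWith (fun (A B : Clique D) => B.1 \ A.1) fs' fst'' :=
          rfl
        have hd : (B :: fst'').drop (A :: fs').length = fst''.drop fs'.length := by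
          simp
        rw [hz, hd]
        have : setFlat ((B.1 \ A.1) :: (List.zipWith (fun (A B : Clique D) => B.1 \ A.1) fs' fst''
            ++ (fst''.drop fs'.length).map Subtype.val))
            = (B.1 \ A.1).toList ++ setFlat (List.zipWith (fun (A B : Clique D) => B.1 \ A.1) fs' fst''
            ++ (fst''.drop fs'.length).map Subtype.val) := by
          simp [setFlat]
        rw [List.cons_append, this]
        refine Relation.EqvGen.trans _ _ _ (TraceEquiv.append_left ((B.1 \ A.1).toList) ih3) ?_
        exact Relation.EqvGen.symm _ _ ht''

end Main

/-- compatibility of concatenation with Foata normal forms.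
If `⟨s⟩ = A₁ ⋯ A_p` and `⟨st⟩ = B₁ ⋯ B_m` then `m ≥ p`, `A_i ⊆ B_i` for all
`1 ≤ i ≤ p`, and `Π((B₁\A₁) ⋯ (B_p\A_p) B_{p+1} ⋯ B_m) = t`. -/
theorem foata_concat [Fintype α] [DecidableEq α] (D : α → α → Prop)
    (hrefl : Reflexive D) (hsymm : Symmetric D)
    (s t : List α) (fs fst : List (Clique D))
    (hfs : fs ∈ Foata D) (hfs' : TraceEquiv D (cliqueFlat fs) s)
    (hfst : fst ∈ Foata D) (hfst' : TraceEquiv D (cliqueFlat fst) (s ++ t)) :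
    fs.length ≤ fst.length ∧
    (∀ (i : ℕ) (hi : i < fs.length) (hi' : i < fst.length),
      (fs.get ⟨i, hi⟩).1 ⊆ (fst.get ⟨i, hi'⟩).1) ∧
    TraceEquiv D
      (setFlat (List.zipWith (fun A B => B.1 \ A.1) fs fst ++
        ((fst.drop fs.length).map Subtype.val)))
      t := by
  have h1 : TraceEquiv D (s ++ t) (cliqueFlat fs ++ t) :=
    TraceEquiv.append_right t (Relation.EqvGen.symm _ _ hfs')
  exact foata_main hrefl hsymm fs fst t hfs hfst
    (Relation.EqvGen.trans _ _ _ hfst' h1)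
end

section
/- In a ground term rewriting graph that is isomorphic to a tree-of-copies graph T(G, p₀), every term t occurring as a vertex has a smallest position u_t (for the prefix ordering on positions) at which t is incident to a rewriting: any two positions at which t is incident to rewritings are comparable or both dominated by a common position of incidence. -/
/-- Ground terms over a signature `F`: finitely branching rose trees. -/
inductive Tm (F : Type*) : Type _
  | node : F → List (Tm F) → Tm F

variable {F V Λ : Type*}

/-- The subterm of `t` at position `p` (if `p` is a position of `t`).
Positions are words over `ℕ` (children numbered from 0). -/
def subtermAt : List ℕ → Tm F → Option (Tm F)
  | [], t => some t
  | i :: p, Tm.node _ ts => (ts[i]?).bind (subtermAt p)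

/-- `replaceAt p s t` replaces the subterm of `t` at position `p` by `s`
(if `p` is a position of `t`). -/
def replaceAt : List ℕ → Tm F → Tm F → Option (Tm F)
  | [], s, _ => some s
  | i :: p, s, Tm.node g ts =>
      (ts[i]?).bind fun c => (replaceAt p s c).map fun c' => Tm.node g (ts.set i c')

/-- `t` rewrites to `t'` with label `a` at position `p`, for a ground term
rewriting system given by a finite list `R` of rules `(l, a, r)`. -/
def stepAt (R : List (Tm F × Λ × Tm F)) (t : Tm F) (a : Λ) (t' : Tm F)
    (p : List ℕ) : Prop :=
  ∃ l r, (l, a, r) ∈ R ∧ subtermAt p t = some l ∧ replaceAt p r t = some t'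

/-- `t` rewrites to `t'` with label `a` (at some position). -/
def gtrStep (R : List (Tm F × Λ × Tm F)) (t : Tm F) (a : Λ) (t' : Tm F) : Prop :=
  ∃ p, stepAt R t a t' p

/-- `t` is reachable from the initial term `i` by rewriting. -/
def gtrReach (R : List (Tm F × Λ × Tm F)) (i t : Tm F) : Prop :=
  Relation.ReflTransGen (fun x y => ∃ a, gtrStep R x a y) i t

/-- Edges of the configuration graph of the GTR system `(R, i)`: rewriting
edges between terms reachable from `i`. -/
def configEdge (R : List (Tm F × Λ × Tm F)) (i : Tm F) (t : Tm F) (a : Λ)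
    (t' : Tm F) : Prop :=
  gtrReach R i t ∧ gtrStep R t a t'

/-- Vertices of the configuration graph: terms incident to an edge. -/
def gtrVertices (R : List (Tm F × Λ × Tm F)) (i : Tm F) : Set (Tm F) :=
  {t | ∃ a t', configEdge R i t a t' ∨ configEdge R i t' a t}

/-- The vertex `t` is incident at position `p` to a rewriting of the
configuration graph (as the source or the target of the rewriting edge). -/
def incidentAt (R : List (Tm F × Λ × Tm F)) (i : Tm F) (t : Tm F)
    (p : List ℕ) : Prop :=
  ∃ a t', (gtrReach R i t ∧ stepAt R t a t' p) ∨
    (gtrReach R i t' ∧ stepAt R t' a t p)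

/-- Edges of the tree-of-copies graph `T(G, p₀)` over a `Σ`-graph `G`:
vertices are words over `V_G`; edges `u·p →^a u·q` for each edge `p →^a q` of
`G`, and `u →^c u·p₀` for each word `u`, where the fresh label `c` is `none`
and labels of `G` are `some a`. -/
def treeEdge (G : V → Λ → V → Prop) (p₀ : V) :
    List V → Option Λ → List V → Prop
  | x, some a, y => ∃ u p q, G p a q ∧ x = u ++ [p] ∧ y = u ++ [q]
  | x, none, y => y = x ++ [p₀]

lemma exists_replaceAt (s : Tm F) :
    ∀ (p : List ℕ) (t l : Tm F), subtermAt p t = some l → ∃ t', replaceAt p s t = some t' := by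
  intro p
  induction p with
  | nil => exact fun t l _ => ⟨s, rfl⟩
  | cons i p ih =>
    rintro ⟨g, ts⟩ l h
    simp only [subtermAt] at h
    obtain ⟨c, hc, hsub⟩ := Option.bind_eq_some_iff.mp h
    obtain ⟨c', hc'⟩ := ih c l hsub
    exact ⟨Tm.node g (ts.set i c'), by simp [replaceAt, hc, hc']⟩

lemma subtermAt_replaceAt_self :
    ∀ (p : List ℕ) (s t t' : Tm F), replaceAt p s t = some t' → subtermAt p t' = some s := by
  intro p
  induction p with
  | nil =>
    intro s t t' h
    simp only [replaceAt, Option.some_inj] at h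
    subst h; rfl
  | cons i p ih =>
    rintro s ⟨g, ts⟩ t' h
    simp only [replaceAt] at h
    obtain ⟨c, hc, hmap⟩ := Option.bind_eq_some_iff.mp h
    obtain ⟨c', hc', ht'⟩ := Option.map_eq_some_iff.mp hmap
    subst ht'
    have hi : i < ts.length := (List.getElem?_eq_some_iff.mp hc).1
    simp only [subtermAt]
    rw [List.getElem?_set_self hi]
    exact ih s c c' hc'

lemma subtermAt_replaceAt_of_ne :
    ∀ (p q : List ℕ), ¬ p <+: q → ¬ q <+: p →
      ∀ (r : Tm F) (t t' : Tm F), replaceAt q r t = some t' →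
        subtermAt p t' = subtermAt p t := by
  intro p
  induction p with
  | nil => intro q hpq _ _ _ _ _; exact absurd (List.nil_prefix) hpq
  | cons i p ih =>
    intro q hpq hqp r t t' h
    match q with
    | [] => exact absurd (List.nil_prefix) hqp
    | j :: q =>
      rcases t with ⟨g, ts⟩
      simp only [replaceAt] at h
      obtain ⟨c, hc, hmap⟩ := Option.bind_eq_some_iff.mp h
      obtain ⟨c', hc', ht'⟩ := Option.map_eq_some_iff.mp hmap
      subst ht'
      by_cases hij : i = j
      · subst hij
        have hpq' : ¬ p <+: q := fun h => hpq (List.cons_prefix_cons.mpr ⟨rfl, h⟩)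
        have hqp' : ¬ q <+: p := fun h => hqp (List.cons_prefix_cons.mpr ⟨rfl, h⟩)
        have hi : i < ts.length := (List.getElem?_eq_some_iff.mp hc).1
        simp only [subtermAt]
        rw [List.getElem?_set_self hi, hc]
        simp only [Option.bind_some]
        exact ih q hpq' hqp' r c c' hc'
      · show ((ts.set j c')[i]?).bind (subtermAt p) = (ts[i]?).bind (subtermAt p)
        rw [List.getElem?_set_ne (by omega)]

lemma replaceAt_comm :
    ∀ (p q : List ℕ), ¬ p <+: q → ¬ q <+: p →
      ∀ (s r t t₁ t₂ : Tm F), replaceAt p s t = some t₁ → replaceAt q r t = some t₂ →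
        ∃ t₃, replaceAt q r t₁ = some t₃ ∧ replaceAt p s t₂ = some t₃ := by
  intro p
  induction p with
  | nil => intro q hpq _ _ _ _ _ _ _ _; exact absurd (List.nil_prefix) hpq
  | cons i p ih =>
    intro q hpq hqp s r t t₁ t₂ h1 h2
    match q with
    | [] => exact absurd (List.nil_prefix) hqp
    | j :: q =>
      rcases t with ⟨g, ts⟩
      simp only [replaceAt] at h1 h2
      obtain ⟨c, hc, hmap1⟩ := Option.bind_eq_some_iff.mp h1
      obtain ⟨c₁, hc₁, ht₁⟩ := Option.map_eq_some_iff.mp hmap1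
      obtain ⟨d, hd, hmap2⟩ := Option.bind_eq_some_iff.mp h2
      obtain ⟨d₂, hd₂, ht₂⟩ := Option.map_eq_some_iff.mp hmap2
      subst ht₁; subst ht₂
      have hi : i < ts.length := (List.getElem?_eq_some_iff.mp hc).1
      have hj : j < ts.length := (List.getElem?_eq_some_iff.mp hd).1
      by_cases hij : i = j
      · subst hij
        have hcd : c = d := by rw [hc] at hd; exact (Option.some_inj.mp hd)
        subst hcd
        have hpq' : ¬ p <+: q := fun h => hpq (List.cons_prefix_cons.mpr ⟨rfl, h⟩)
        have hqp' : ¬ q <+: p := fun h => hqp (List.cons_prefix_cons.mpr ⟨rfl, h⟩)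
        obtain ⟨c₃, he1, he2⟩ := ih q hpq' hqp' s r c c₁ d₂ hc₁ hd₂
        refine ⟨Tm.node g (ts.set i c₃), ?_, ?_⟩
        · simp only [replaceAt]
          rw [List.getElem?_set_self hi]
          simp [he1, List.set_set]
        · simp only [replaceAt]
          rw [List.getElem?_set_self hi]
          simp [he2, List.set_set]
      · refine ⟨Tm.node g ((ts.set i c₁).set j d₂), ?_, ?_⟩
        · simp only [replaceAt]
          rw [List.getElem?_set_ne (by omega), hd]
          simp [hd₂]
        · simp only [replaceAt]
          rw [List.getElem?_set_ne (by omega : ¬ j = i), hc]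
          simp [hc₁, List.set_comm _ _ hij]

lemma stepAt_ne {R : List (Tm F × Λ × Tm F)} (hR : ∀ l a r, (l, a, r) ∈ R → l ≠ r)
    {t : Tm F} {a : Λ} {t' : Tm F} {p : List ℕ} (h : stepAt R t a t' p) : t ≠ t' := by
  obtain ⟨l, r, hmem, hsub, hrep⟩ := h
  intro he
  subst he
  rw [subtermAt_replaceAt_self p r t t hrep] at hsub
  exact hR l a r hmem (Option.some_inj.mp hsub).symm

/-- Commutation of steps at incomparable positions. -/

lemma stepAt_comm {R : List (Tm F × Λ × Tm F)} (hR : ∀ l a r, (l, a, r) ∈ R → l ≠ r)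
    {t t₁ t₂ : Tm F} {a b : Λ} {p q : List ℕ} (hpq : ¬ p <+: q) (hqp : ¬ q <+: p)
    (h1 : stepAt R t a t₁ p) (h2 : stepAt R t b t₂ q) :
    t₁ ≠ t₂ ∧ ∃ t₃, stepAt R t₁ b t₃ q ∧ stepAt R t₂ a t₃ p := by
  obtain ⟨l₁, r₁, hm₁, hs₁, hr₁⟩ := h1
  obtain ⟨l₂, r₂, hm₂, hs₂, hr₂⟩ := h2
  have hne : t₁ ≠ t₂ := by
    intro he
    have e1 : subtermAt p t₁ = some r₁ := subtermAt_replaceAt_self p r₁ t t₁ hr₁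
    have e2 : subtermAt p t₂ = some l₁ := by
      rw [subtermAt_replaceAt_of_ne p q hpq hqp r₂ t t₂ hr₂]; exact hs₁
    rw [he, e2] at e1
    exact hR l₁ a r₁ hm₁ (Option.some_inj.mp e1)
  obtain ⟨t₃, he1, he2⟩ := replaceAt_comm p q hpq hqp r₁ r₂ t t₁ t₂ hr₁ hr₂
  refine ⟨hne, t₃, ⟨l₂, r₂, hm₂, ?_, he1⟩, ⟨l₁, r₁, hm₁, ?_, he2⟩⟩
  · rw [subtermAt_replaceAt_of_ne q p hqp hpq r₁ t t₁ hr₁]; exact hs₂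
  · rw [subtermAt_replaceAt_of_ne p q hpq hqp r₂ t t₂ hr₂]; exact hs₁

lemma treeEdge_none_iff {G : V → Λ → V → Prop} {p₀ : V} {x y : List V} :
    treeEdge G p₀ x none y ↔ y = x ++ [p₀] := Iff.rfl

lemma treeEdge_some_iff {G : V → Λ → V → Prop} {p₀ : V} {x y : List V} {a : Λ} :
    treeEdge G p₀ x (some a) y ↔ ∃ u p q, G p a q ∧ x = u ++ [p] ∧ y = u ++ [q] := Iff.rfl

lemma snoc_inj {α : Type*} {x u : List α} {a b : α} (h : x ++ [a] = u ++ [b]) :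
    x = u ∧ a = b := by
  have := List.append_inj' h rfl
  exact ⟨this.1, by simpa using this.2⟩

/-- Key lemma: every incident position of a vertex `f x` is comparable with
the position `w` of its c-step (the `none`-labelled step to `f (x ++ [p₀])`). -/

lemma key_comparable {F V Lab : Type*} {R : List (Tm F × Option Lab × Tm F)}
    (hR : ∀ l a r, (l, a, r) ∈ R → l ≠ r)
    {i : Tm F} {G : V → Lab → V → Prop} {p₀ : V} {f : List V → Tm F}
    (hsurj : ∀ t ∈ gtrVertices R i, ∃ x, f x = t)
    (hedge : ∀ (x y : List V) (l : Option Lab),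
      treeEdge G p₀ x l y ↔ configEdge R i (f x) l (f y))
    (x : List V) (w : List ℕ)
    (hstep : stepAt R (f x) none (f (x ++ [p₀])) w)
    (hreach : gtrReach R i (f x))
    (p : List ℕ) (hp : incidentAt R i (f x) p) :
    w <+: p ∨ p <+: w := by
  by_contra hcon
  push_neg at hcon
  obtain ⟨hwp, hpw⟩ := hcon
  obtain ⟨b, t', hp⟩ := hp
  rcases hp with ⟨-, hstepP⟩ | ⟨hreachS, hstepP⟩
  · -- `f x` is the source of a step at `p`
    obtain ⟨hne, t₃, h13, h23⟩ := stepAt_comm hR hwp hpw hstep hstepP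
    have hreach_c : gtrReach R i (f (x ++ [p₀])) :=
      Relation.ReflTransGen.tail hreach ⟨none, w, hstep⟩
    have hreach2 : gtrReach R i t' := Relation.ReflTransGen.tail hreach ⟨b, p, hstepP⟩
    have hv2 : t' ∈ gtrVertices R i := ⟨none, t₃, Or.inl ⟨hreach2, w, h23⟩⟩
    have hv3 : t₃ ∈ gtrVertices R i := ⟨none, t', Or.inr ⟨hreach2, w, h23⟩⟩
    obtain ⟨y₂, hy₂⟩ := hsurj t' hv2
    obtain ⟨y₃, hy₃⟩ := hsurj t₃ hv3
    have e1 : treeEdge G p₀ y₂ none y₃ :=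
      (hedge y₂ y₃ none).mpr ⟨hy₂ ▸ hreach2, w, hy₂ ▸ hy₃ ▸ h23⟩
    have e2 : treeEdge G p₀ x b y₂ := (hedge x y₂ b).mpr ⟨hreach, p, hy₂ ▸ hstepP⟩
    have e3 : treeEdge G p₀ (x ++ [p₀]) b y₃ :=
      (hedge (x ++ [p₀]) y₃ b).mpr ⟨hreach_c, p, hy₃ ▸ h13⟩
    have hy₃e : y₃ = y₂ ++ [p₀] := treeEdge_none_iff.mp e1
    cases b with
    | none =>
      have : y₂ = x ++ [p₀] := treeEdge_none_iff.mp e2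
      exact hne (by rw [← hy₂, this])
    | some lab =>
      obtain ⟨u', α', γ', hG', hxu', hy3u⟩ := treeEdge_some_iff.mp e3
      have hu'x : u' = x := (snoc_inj hxu'.symm).1
      have h2 : y₂ ++ [p₀] = u' ++ [γ'] := hy₃e.symm.trans hy3u
      have hyx : y₂ = x := (snoc_inj h2).1.trans hu'x
      exact stepAt_ne hR hstepP (by rw [← hy₂, hyx])
  · -- `f x` is the target of a step from `s = t'` at `p`
    obtain ⟨l_c, r_c, hmc, hsubc, hrepc⟩ := hstep
    obtain ⟨l_b, r_b, hmb, hsubb, hrepb⟩ := hstepP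
    -- the c-redex of `f x` at `w` is already present in `s`
    have hsubw_s : subtermAt w t' = some l_c := by
      rw [← subtermAt_replaceAt_of_ne w p hwp hpw r_b t' (f x) hrepb]; exact hsubc
    obtain ⟨s_c, hrep_sc⟩ := exists_replaceAt r_c w t' l_c hsubw_s
    have hstep_sc : stepAt R t' none s_c w := ⟨l_c, r_c, hmc, hsubw_s, hrep_sc⟩
    obtain ⟨z, hz1, hz2⟩ :=
      replaceAt_comm p w hpw hwp r_b r_c t' (f x) s_c hrepb hrep_sc
    rw [hrepc] at hz1
    have hzc : z = f (x ++ [p₀]) := (Option.some_inj.mp hz1).symm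
    subst hzc
    have hstep_sct : stepAt R s_c b (f (x ++ [p₀])) p := by
      refine ⟨l_b, r_b, hmb, ?_, hz2⟩
      rw [subtermAt_replaceAt_of_ne p w hpw hwp r_c t' s_c hrep_sc]; exact hsubb
    have hstepP' : stepAt R t' b (f x) p := ⟨l_b, r_b, hmb, hsubb, hrepb⟩
    have hreach_sc : gtrReach R i s_c := Relation.ReflTransGen.tail hreachS ⟨none, w, hstep_sc⟩
    have hvS : t' ∈ gtrVertices R i := ⟨b, f x, Or.inl ⟨hreachS, p, hstepP'⟩⟩
    have hvSc : s_c ∈ gtrVertices R i :=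
      ⟨b, f (x ++ [p₀]), Or.inl ⟨hreach_sc, p, hstep_sct⟩⟩
    obtain ⟨y, hy⟩ := hsurj t' hvS
    obtain ⟨y_c, hy_c⟩ := hsurj s_c hvSc
    have e1 : treeEdge G p₀ y none y_c :=
      (hedge y y_c none).mpr ⟨hy ▸ hreachS, w, hy ▸ hy_c ▸ hstep_sc⟩
    have hyce : y_c = y ++ [p₀] := treeEdge_none_iff.mp e1
    have e2 : treeEdge G p₀ y b x := (hedge y x b).mpr ⟨hy ▸ hreachS, p, hy ▸ hstepP'⟩
    have e3 : treeEdge G p₀ y_c b (x ++ [p₀]) :=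
      (hedge y_c (x ++ [p₀]) b).mpr ⟨hy_c ▸ hreach_sc, p, hy_c ▸ hstep_sct⟩
    cases b with
    | none =>
      have hx1 : x = y ++ [p₀] := treeEdge_none_iff.mp e2
      have hfx : f x = s_c := by rw [hx1, ← hyce, hy_c]
      -- but `f x` and `s_c` differ at `w`
      have d1 : subtermAt w (f x) = some l_c := hsubc
      have d2 : subtermAt w s_c = some r_c := subtermAt_replaceAt_self w r_c t' s_c hrep_sc
      rw [hfx, d2] at d1
      exact hR l_c none r_c hmc (Option.some_inj.mp d1).symm
    | some lab =>
      obtain ⟨u', α', β', hG', hycu, hxpu⟩ := treeEdge_some_iff.mp e3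
      have hu'1 : u' = x := (snoc_inj hxpu.symm).1
      have hu'2 : u' = y := (snoc_inj (hycu.symm.trans hyce)).1
      have hxy : x = y := by rw [← hu'1, hu'2]
      exact stepAt_ne hR hstepP' (by rw [← hy, hxy])

/-- Lemma `reecincomp`: if the configuration graph of a ground
term rewriting system `(R, i)` (with distinct left and right hand sides) is
isomorphic to a tree-of-copies graph `T(G, p₀)`, then every term `t` occurring
as a vertex has a smallest position (for the prefix ordering) at which `t` is
incident to a rewriting. -/
theorem gtr_tree_smallest_rewriting_position
    {F V Lab : Type*} (R : List (Tm F × Option Lab × Tm F))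
    (hR : ∀ l a r, (l, a, r) ∈ R → l ≠ r)
    (i : Tm F) (G : V → Lab → V → Prop) (p₀ : V)
    (f : List V → Tm F) (hinj : Function.Injective f)
    (hsurj : ∀ t ∈ gtrVertices R i, ∃ x, f x = t)
    (hedge : ∀ (x y : List V) (l : Option Lab),
      treeEdge G p₀ x l y ↔ configEdge R i (f x) l (f y)) :
    ∀ t ∈ gtrVertices R i, ∃ u : List ℕ, incidentAt R i t u ∧
      ∀ p : List ℕ, incidentAt R i t p → u <+: p := by
  intro t ht
  obtain ⟨x, hx⟩ := hsurj t ht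
  subst hx
  have hce : configEdge R i (f x) none (f (x ++ [p₀])) :=
    (hedge x (x ++ [p₀]) none).mp rfl
  obtain ⟨hreach, w, hstep⟩ := hce
  have hw : incidentAt R i (f x) w := ⟨none, f (x ++ [p₀]), Or.inl ⟨hreach, hstep⟩⟩
  have hA : ∀ p, incidentAt R i (f x) p → w <+: p ∨ p <+: w :=
    key_comparable hR hsurj hedge x w hstep hreach
  obtain ⟨n, ⟨u, hu, hun⟩, hmin⟩ :=
    Nat.lt_wfRel.wf.has_min {n | ∃ u, incidentAt R i (f x) u ∧ u.length = n}
      ⟨w.length, w, hw, rfl⟩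
  refine ⟨u, hu, fun p hp => ?_⟩
  have hup : u.length ≤ p.length := by
    have h2 : ¬ p.length < n := hmin p.length ⟨p, hp, rfl⟩; omega
  have huw : u <+: w := by
    rcases hA u hu with h | h
    · have : w = u := h.eq_of_length_le (by have h3 : ¬ w.length < n := hmin w.length ⟨w, hw, rfl⟩; omega)
      rw [this]
    · exact h
  rcases hA p hp with h | h
  · exact huw.trans h
  · exact List.prefix_of_prefix_length_le huw h hup
end
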